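/- Let k \ge 2 and C_k > 0. The series \sum_{q=1}^{\infty} |c_q(h)| \Big( \sum_{q_0 q_1 = q} \frac{\mu(q_1)^2 d_k(q)^{C_k}}{q_0 \varphi(q_1)} \Big)^2 converges for every nonzero integer h, and its value is O\big( \sum_{d \mid |h|} d^{-9/10} \big), uniformly in h. -/

import Mathlib

open Finset ArithmeticFunction
open scoped ArithmeticFunction.Moebius ArithmeticFunction.zeta

/-- `e(t) = exp(2πit)` -/
noncomputable def e (t : ℝ) : ℂ := Complex.exp (2 * Real.pi * Complex.I * t)

/-- The Ramanujan sum `c_q(h)`. -/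
noncomputable def ramanujanSum (q : ℕ) (h : ℤ) : ℂ :=
  ∑ a ∈ (Finset.Icc 1 q).filter (fun a => Nat.gcd a q = 1), e ((a : ℝ) * (h : ℝ) / (q : ℝ))

lemma sum_moebius_divisors (n : ℕ) : ∑ d ∈ n.divisors, (μ d : ℂ) = if n = 1 then 1 else 0 := by
  have h := congrArg (fun f : ArithmeticFunction ℂ => f n) (coe_moebius_mul_coe_zeta (R := ℂ))
  simp only [coe_mul_zeta_apply, one_apply, intCoe_apply] at h
  exact h


lemma geom_e (m : ℕ) (hm : m ≠ 0) (h : ℤ) :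
    ∑ b ∈ Finset.Icc 1 m, e ((b : ℝ) * (h : ℝ) / (m : ℝ)) =
      if (m : ℤ) ∣ h then (m : ℂ) else 0 := by
  have hm' : (m : ℂ) ≠ 0 := Nat.cast_ne_zero.mpr hm
  have h2pi : (2 : ℂ) * Real.pi * Complex.I ≠ 0 := by
    simp [Real.pi_ne_zero, Complex.I_ne_zero, Complex.ofReal_ne_zero]
  set z : ℂ := Complex.exp (2 * Real.pi * Complex.I * ((h : ℂ) / (m : ℂ))) with hz
  have hpow : ∀ b : ℕ, e ((b : ℝ) * (h : ℝ) / (m : ℝ)) = z ^ b := by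
    intro b
    rw [hz, ← Complex.exp_nat_mul]
    unfold e
    congr 1
    push_cast
    field_simp
  have hkey : ∀ c : ℤ, (c : ℂ) * (2 * Real.pi * Complex.I * ((h : ℂ) / (m : ℂ)))
      = ((c * h : ℤ) : ℂ) * (2 * Real.pi * Complex.I) / (m : ℂ) := by
    intro c; push_cast; ring
  have hzm : z ^ m = 1 := by
    rw [hz, ← Complex.exp_nat_mul]
    have : (m : ℂ) * (2 * Real.pi * Complex.I * ((h : ℂ) / (m : ℂ)))
        = (h : ℤ) * (2 * Real.pi * Complex.I) := by
      push_cast; field_simp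
    rw [this, Complex.exp_int_mul_two_pi_mul_I]
  simp only [hpow]
  by_cases hd : (m : ℤ) ∣ h
  · obtain ⟨c, hc⟩ := hd
    have hz1 : z = 1 := by
      rw [hz]
      have : (2 : ℂ) * Real.pi * Complex.I * ((h : ℂ) / (m : ℂ))
          = (c : ℤ) * (2 * Real.pi * Complex.I) := by
        have hh : (h : ℂ) = (m : ℂ) * (c : ℂ) := by exact_mod_cast congrArg (Int.cast : ℤ → ℂ) hc
        rw [hh]; field_simp
      rw [this, Complex.exp_int_mul_two_pi_mul_I]
    rw [if_pos ⟨c, hc⟩, hz1]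
    simp [Nat.card_Icc]
  · have hz1 : z ≠ 1 := by
      intro hz1
      rw [hz, Complex.exp_eq_one_iff] at hz1
      obtain ⟨n, hn⟩ := hz1
      apply hd
      have h1 : (2 : ℂ) * Real.pi * Complex.I * ((h : ℂ) / (m : ℂ))
          = 2 * Real.pi * Complex.I * (n : ℂ) := by rw [hn]; ring
      have h2 : (h : ℂ) / (m : ℂ) = (n : ℂ) := mul_left_cancel₀ h2pi h1
      have h3 : h = n * m := by
        have := h2
        field_simp at this
        rw [mul_comm]; exact_mod_cast this
      exact ⟨n, by rw [h3, mul_comm]⟩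
    have hsum : ∑ b ∈ Finset.Icc 1 m, z ^ b = z * ((z ^ m - 1) / (z - 1)) := by
      rw [← geom_sum_eq hz1, Finset.mul_sum]
      rw [show Finset.Icc 1 m = Finset.Ico 1 (m + 1) from rfl, Finset.sum_Ico_eq_sum_range]
      simp only [Nat.add_sub_cancel]
      exact Finset.sum_congr rfl fun i _ => by rw [pow_add, pow_one, mul_comm]
    rw [hsum, hzm, if_neg hd]
    simp


lemma ramanujanSum_eq (q : ℕ) (hq : q ≠ 0) (h : ℤ) :
    ramanujanSum q h = ∑ m ∈ (Nat.gcd q h.natAbs).divisors, (m : ℂ) * (μ (q / m) : ℂ) := by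
  rw [ramanujanSum, Finset.sum_filter]
  have step1 : ∀ a ∈ Finset.Icc 1 q,
      (if Nat.gcd a q = 1 then e ((a : ℝ) * (h : ℝ) / (q : ℝ)) else 0)
        = ∑ d ∈ q.divisors.filter (· ∣ a), (μ d : ℂ) * e ((a : ℝ) * (h : ℝ) / (q : ℝ)) := by
    intro a ha
    have hdiv : (Nat.gcd a q).divisors = q.divisors.filter (· ∣ a) := by
      ext d
      simp only [Nat.mem_divisors, Finset.mem_filter, Nat.dvd_gcd_iff]
      constructor
      · rintro ⟨⟨h1, h2⟩, -⟩
        exact ⟨⟨h2, hq⟩, h1⟩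
      · rintro ⟨⟨h1, -⟩, h2⟩
        exact ⟨⟨h2, h1⟩, fun hc => hq (Nat.eq_zero_of_gcd_eq_zero_right hc)⟩
    rw [← Finset.sum_mul, ← hdiv, sum_moebius_divisors]
    by_cases hg : Nat.gcd a q = 1 <;> simp [hg]
  rw [Finset.sum_congr rfl step1]
  simp only [Finset.sum_filter]
  rw [Finset.sum_comm]
  have step2 : ∀ d ∈ q.divisors,
      (∑ a ∈ Finset.Icc 1 q, if d ∣ a then (μ d : ℂ) * e ((a : ℝ) * (h : ℝ) / (q : ℝ)) else 0)
        = (μ d : ℂ) * (if (q / d) ∣ h.natAbs then ((q / d : ℕ) : ℂ) else 0) := by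
    intro d hd
    rw [Nat.mem_divisors] at hd
    have hd0 : d ≠ 0 := fun hc => hq (by subst hc; exact Nat.eq_zero_of_zero_dvd hd.1)
    have himg : (Finset.Icc 1 q).filter (d ∣ ·) = (Finset.Icc 1 (q / d)).image (fun b => d * b) := by
      ext a
      simp only [Finset.mem_filter, Finset.mem_Icc, Finset.mem_image]
      constructor
      · rintro ⟨⟨h1, h2⟩, hda⟩
        refine ⟨a / d, ⟨?_, Nat.div_le_div_right h2⟩, Nat.mul_div_cancel' hda⟩
        exact Nat.div_pos (Nat.le_of_dvd h1 hda) (Nat.pos_of_ne_zero hd0)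
      · rintro ⟨b, ⟨hb1, hb2⟩, rfl⟩
        refine ⟨⟨?_, ?_⟩, Dvd.intro b rfl⟩
        · exact Nat.one_le_iff_ne_zero.mpr (Nat.mul_ne_zero hd0 (Nat.one_le_iff_ne_zero.mp hb1))
        · calc d * b ≤ d * (q / d) := Nat.mul_le_mul_left d hb2
            _ = q := Nat.mul_div_cancel' hd.1
    rw [← Finset.sum_filter, ← Finset.mul_sum, himg, Finset.sum_image
      (fun x _ y _ hxy => Nat.eq_of_mul_eq_mul_left (Nat.pos_of_ne_zero hd0) hxy)]
    have hqd0 : q / d ≠ 0 := by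
      intro hc
      exact hq (by rw [← Nat.mul_div_cancel' hd.1, hc, Nat.mul_zero])
    have hcast : ∀ b : ℕ, ((d * b : ℕ) : ℝ) * (h : ℝ) / (q : ℝ)
        = (b : ℝ) * (h : ℝ) / ((q / d : ℕ) : ℝ) := by
      intro b
      have hdq : (q : ℝ) = (d : ℝ) * ((q / d : ℕ) : ℝ) := by
        exact_mod_cast (Nat.mul_div_cancel' hd.1).symm
      have hX : ((q / d : ℕ) : ℝ) ≠ 0 := Nat.cast_ne_zero.mpr hqd0
      have hd' : (d : ℝ) ≠ 0 := Nat.cast_ne_zero.mpr hd0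
      rw [hdq]
      push_cast
      field_simp
    have : ∀ b ∈ Finset.Icc 1 (q / d), e (((d * b : ℕ) : ℝ) * (h : ℝ) / (q : ℝ))
        = e ((b : ℝ) * (h : ℝ) / ((q / d : ℕ) : ℝ)) := by
      intro b _
      rw [hcast b]
    rw [Finset.sum_congr rfl this, geom_e (q / d) hqd0 h]
    congr 1
    simp only [Int.natCast_dvd]
  rw [Finset.sum_congr rfl step2]
  have step3 := Nat.sum_div_divisors (α := ℂ) q
    (fun m => (if m ∣ h.natAbs then (m : ℂ) else 0) * (μ (q / m) : ℂ))
  have step3' : ∑ d ∈ q.divisors,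
      (μ d : ℂ) * (if (q / d) ∣ h.natAbs then ((q / d : ℕ) : ℂ) else 0)
      = ∑ d ∈ q.divisors, (fun m => (if m ∣ h.natAbs then (m : ℂ) else 0) * (μ (q / m) : ℂ)) (q / d) := by
    refine Finset.sum_congr rfl fun d hd => ?_
    rw [Nat.mem_divisors] at hd
    simp only []
    rw [Nat.div_div_self hd.1 hq, mul_comm]
  rw [step3', step3]
  have hfilter : q.divisors.filter (fun m => m ∣ h.natAbs) = (Nat.gcd q h.natAbs).divisors := by
    ext m
    simp only [Finset.mem_filter, Nat.mem_divisors, Nat.dvd_gcd_iff]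
    constructor
    · rintro ⟨⟨h1, -⟩, h2⟩
      exact ⟨⟨h1, h2⟩, fun hc => hq (Nat.eq_zero_of_gcd_eq_zero_left hc)⟩
    · rintro ⟨⟨h1, h2⟩, -⟩
      exact ⟨⟨h1, hq⟩, h2⟩
  rw [← hfilter, Finset.sum_filter]
  refine Finset.sum_congr rfl fun m hm => ?_
  by_cases hmh : m ∣ h.natAbs <;> simp [hmh]


lemma totient_mul_card_ge (n : ℕ) (hn : Squarefree n) :
    n ≤ n.totient * n.divisors.card := by
  have hn0 : n ≠ 0 := hn.ne_zero
  have hprod : ∏ p ∈ n.primeFactors, p = n := Nat.prod_primeFactors_of_squarefree hn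
  have htot : n.totient = ∏ p ∈ n.primeFactors, (p - 1) := by
    rw [Nat.totient_eq_prod_factorization hn0]
    rw [Finsupp.prod]
    simp only [Nat.support_factorization]
    refine Finset.prod_congr rfl fun p hp => ?_
    have hp' : p.Prime := Nat.prime_of_mem_primeFactors hp
    rw [Nat.factorization_eq_one_of_squarefree hn hp' (Nat.dvd_of_mem_primeFactors hp)]
    simp
  have hcard : n.divisors.card = ∏ p ∈ n.primeFactors, 2 := by
    rw [Nat.card_divisors hn0]
    refine Finset.prod_congr rfl fun p hp => ?_
    rw [Nat.factorization_eq_one_of_squarefree hn (Nat.prime_of_mem_primeFactors hp)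
      (Nat.dvd_of_mem_primeFactors hp)]
  calc n = ∏ p ∈ n.primeFactors, p := hprod.symm
    _ ≤ ∏ p ∈ n.primeFactors, (p - 1) * 2 := by
        refine Finset.prod_le_prod' fun p hp => ?_
        have h2 := (Nat.prime_of_mem_primeFactors hp).two_le
        omega
    _ = n.totient * n.divisors.card := by rw [htot, hcard, ← Finset.prod_mul_distrib]


lemma zeta_pow_le (k : ℕ) (q : ℕ) (hq : q ≠ 0) :
    ((ζ ^ k : ArithmeticFunction ℕ) q) ≤ q.divisors.card ^ k := by
  induction k generalizing q with
  | zero =>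
    simp only [pow_zero, one_apply]
    split_ifs <;> simp
  | succ k ih =>
    rw [pow_succ, mul_comm, zeta_mul_apply]
    calc ∑ i ∈ q.divisors, (ζ ^ k : ArithmeticFunction ℕ) i
        ≤ ∑ i ∈ q.divisors, q.divisors.card ^ k := by
          refine Finset.sum_le_sum fun i hi => ?_
          rw [Nat.mem_divisors] at hi
          have hi0 : i ≠ 0 := fun hc => hq (by subst hc; exact Nat.eq_zero_of_zero_dvd hi.1)
          exact (ih i hi0).trans (Nat.pow_le_pow_left
            (Finset.card_le_card (Nat.divisors_subset_of_dvd hq hi.1)) k)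
      _ = q.divisors.card ^ (k + 1) := by
          rw [Finset.sum_const, smul_eq_mul, pow_succ, mul_comm]


lemma divisor_bound (ε : ℝ) (hε : 0 < ε) :
    ∃ A : ℝ, 1 ≤ A ∧ ∀ n : ℕ, n ≠ 0 → (n.divisors.card : ℝ) ≤ A * (n : ℝ) ^ ε := by
  set m : ℕ := ⌈1 / ε⌉₊ with hm_def
  have hm1 : 1 ≤ m := Nat.one_le_iff_ne_zero.mpr (by
    simp only [hm_def, Ne, Nat.ceil_eq_zero, not_le]
    positivity)
  have hmε : 1 ≤ (m : ℝ) * ε := by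
    have h1 : 1 / ε ≤ (m : ℝ) := Nat.le_ceil _
    calc (1 : ℝ) = (1 / ε) * ε := by field_simp
      _ ≤ (m : ℝ) * ε := by gcongr
  refine ⟨(m : ℝ) ^ (2 ^ m), one_le_pow₀ (by exact_mod_cast hm1), fun n hn => ?_⟩
  -- factor-wise bounds
  have key1 : ∀ p a : ℕ, 2 ≤ p → (a + 1 : ℝ) ≤ (m : ℝ) * (p : ℝ) ^ ((a : ℝ) * ε) := by
    intro p a hp
    have hnat : a + 1 ≤ m * 2 ^ (a / m) := by
      have h1 := Nat.div_add_mod a m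
      have h2 : a % m < m := Nat.mod_lt a (Nat.lt_of_lt_of_le Nat.zero_lt_one hm1)
      have h3 : a / m + 1 ≤ 2 ^ (a / m) := Nat.lt_two_pow_self
      have h4 : a + 1 ≤ m * (a / m + 1) := by nlinarith [h1, h2]
      exact h4.trans (Nat.mul_le_mul_left m h3)
    have hstep : ((a : ℝ) + 1) ≤ (m : ℝ) * (2 : ℝ) ^ ((a / m : ℕ) : ℝ) := by
      have := (Nat.cast_le (α := ℝ)).mpr hnat
      push_cast at this
      rw [Real.rpow_natCast]
      exact_mod_cast this
    refine hstep.trans (mul_le_mul_of_nonneg_left ?_ (Nat.cast_nonneg m))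
    calc (2 : ℝ) ^ ((a / m : ℕ) : ℝ) ≤ (2 : ℝ) ^ ((a : ℝ) * ε) := by
          apply Real.rpow_le_rpow_of_exponent_le one_le_two
          have h4 : ((a / m : ℕ) : ℝ) ≤ (a : ℝ) / (m : ℝ) := Nat.cast_div_le
          refine h4.trans ?_
          rw [div_le_iff₀ (by positivity : (0:ℝ) < (m:ℝ))]
          calc (a : ℝ) = (a : ℝ) * 1 := (mul_one _).symm
            _ ≤ (a : ℝ) * ((m : ℝ) * ε) := by
                apply mul_le_mul_of_nonneg_left hmε (Nat.cast_nonneg a)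
            _ = (a : ℝ) * ε * m := by ring
      _ ≤ (p : ℝ) ^ ((a : ℝ) * ε) := by
          apply Real.rpow_le_rpow (by norm_num) (by exact_mod_cast hp)
          positivity
  have key2 : ∀ p a : ℕ, 2 ^ m ≤ p → (a + 1 : ℝ) ≤ (p : ℝ) ^ ((a : ℝ) * ε) := by
    intro p a hp
    have h1 : (a + 1 : ℝ) ≤ (2 : ℝ) ^ (a : ℝ) := by
      have : a + 1 ≤ 2 ^ a := Nat.lt_two_pow_self
      rw [Real.rpow_natCast]
      exact_mod_cast this
    refine h1.trans ?_
    calc (2 : ℝ) ^ (a : ℝ) ≤ (2 : ℝ) ^ ((m : ℝ) * ((a : ℝ) * ε)) := by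
          apply Real.rpow_le_rpow_of_exponent_le one_le_two
          calc (a : ℝ) = 1 * (a : ℝ) := (one_mul _).symm
            _ ≤ ((m : ℝ) * ε) * (a : ℝ) := by
                apply mul_le_mul_of_nonneg_right hmε (Nat.cast_nonneg a)
            _ = (m : ℝ) * ((a : ℝ) * ε) := by ring
      _ = (((2 : ℕ) ^ m : ℕ) : ℝ) ^ ((a : ℝ) * ε) := by
          rw [Nat.cast_pow, Nat.cast_ofNat, ← Real.rpow_natCast (2:ℝ) m,
            ← Real.rpow_mul (by norm_num : (0:ℝ) ≤ 2)]
      _ ≤ (p : ℝ) ^ ((a : ℝ) * ε) := by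
          apply Real.rpow_le_rpow (by positivity) (by exact_mod_cast hp)
          positivity
  have hd : (n.divisors.card : ℝ) = ∏ p ∈ n.primeFactors, ((n.factorization p : ℝ) + 1) := by
    rw [Nat.card_divisors hn]
    push_cast
    rfl
  have hnpow : (n : ℝ) ^ ε = ∏ p ∈ n.primeFactors, (p : ℝ) ^ ((n.factorization p : ℝ) * ε) := by
    have h0 : (n : ℝ) = ∏ p ∈ n.primeFactors, (p : ℝ) ^ (n.factorization p : ℕ) := by
      conv_lhs => rw [← Nat.factorization_prod_pow_eq_self hn]
      simp only [Finsupp.prod, Nat.support_factorization]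
      push_cast
      rfl
    rw [h0, ← Real.finset_prod_rpow _ _ (fun p _ => by positivity) ε]
    refine Finset.prod_congr rfl fun p hp => ?_
    rw [← Real.rpow_natCast (p : ℝ) (n.factorization p), ← Real.rpow_mul (Nat.cast_nonneg p)]
  rw [hd, hnpow]
  have hptwise : ∀ p ∈ n.primeFactors, ((n.factorization p : ℝ) + 1)
      ≤ (if p < 2 ^ m then (m : ℝ) else 1) * (p : ℝ) ^ ((n.factorization p : ℝ) * ε) := by
    intro p hp
    have hp2 : 2 ≤ p := (Nat.prime_of_mem_primeFactors hp).two_le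
    by_cases hcase : p < 2 ^ m
    · rw [if_pos hcase]
      exact key1 p (n.factorization p) hp2
    · rw [if_neg hcase, one_mul]
      exact key2 p (n.factorization p) (le_of_not_gt hcase)
  calc ∏ p ∈ n.primeFactors, ((n.factorization p : ℝ) + 1)
      ≤ ∏ p ∈ n.primeFactors,
          (if p < 2 ^ m then (m : ℝ) else 1) * (p : ℝ) ^ ((n.factorization p : ℝ) * ε) := by
        exact Finset.prod_le_prod (fun p _ => by positivity) hptwise
    _ = (∏ p ∈ n.primeFactors, if p < 2 ^ m then (m : ℝ) else 1)
        * ∏ p ∈ n.primeFactors, (p : ℝ) ^ ((n.factorization p : ℝ) * ε) := by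
        rw [Finset.prod_mul_distrib]
    _ ≤ (m : ℝ) ^ (2 ^ m) * ∏ p ∈ n.primeFactors, (p : ℝ) ^ ((n.factorization p : ℝ) * ε) := by
        apply mul_le_mul_of_nonneg_right _ (Finset.prod_nonneg fun p _ => by positivity)
        rw [Finset.prod_ite, Finset.prod_const, Finset.prod_const, one_pow, mul_one]
        have hcard : (n.primeFactors.filter (fun p => p < 2 ^ m)).card ≤ 2 ^ m := by
          calc (n.primeFactors.filter (fun p => p < 2 ^ m)).card
              ≤ (Finset.range (2 ^ m)).card := by
                apply Finset.card_le_card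
                intro p hp
                rw [Finset.mem_filter] at hp
                exact Finset.mem_range.mpr hp.2
            _ = 2 ^ m := Finset.card_range _
        exact pow_le_pow_right₀ (by exact_mod_cast hm1) hcard


lemma norm_ramanujanSum_le (q : ℕ) (hq : q ≠ 0) (h : ℤ) :
    ‖ramanujanSum q h‖ ≤ ∑ m ∈ (Nat.gcd q h.natAbs).divisors, (m : ℝ) := by
  rw [ramanujanSum_eq q hq h]
  refine (norm_sum_le _ _).trans (Finset.sum_le_sum fun m hm => ?_)
  rw [norm_mul]
  have h1 : ‖(m : ℂ)‖ = (m : ℝ) := by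
    simp
  have h2 : ‖((μ (q / m) : ℤ) : ℂ)‖ ≤ 1 := by
    rw [Complex.norm_intCast]
    exact_mod_cast abs_moebius_le_one
  calc ‖(m : ℂ)‖ * ‖((μ (q / m) : ℤ) : ℂ)‖ ≤ (m : ℝ) * 1 := by
        rw [h1]; exact mul_le_mul_of_nonneg_left h2 (Nat.cast_nonneg m)
    _ = (m : ℝ) := mul_one _

lemma card_divisorsAntidiagonal' (q : ℕ) :
    q.divisorsAntidiagonal.card = q.divisors.card := by
  rw [← Nat.image_fst_divisorsAntidiagonal (n := q)]
  rw [Finset.card_image_of_injOn]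
  intro x hx y hy hxy
  simp only [Finset.mem_coe, Nat.mem_divisorsAntidiagonal] at hx hy
  have hx1 : x.1 ≠ 0 := by
    intro hc; exact hx.2 (by rw [← hx.1, hc, zero_mul])
  have : x.1 * x.2 = x.1 * y.2 := by rw [hx.1, hxy, hy.1]
  have h2 : x.2 = y.2 := Nat.eq_of_mul_eq_mul_left (Nat.pos_of_ne_zero hx1) this
  exact Prod.ext hxy h2

lemma weight_bound (k : ℕ) (Ck : ℝ) (hCk : 0 < Ck) (A ε : ℝ) (hA1 : 1 ≤ A) (hε : 0 ≤ ε)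
    (hdiv : ∀ n : ℕ, n ≠ 0 → (n.divisors.card : ℝ) ≤ A * (n : ℝ) ^ ε)
    (hεE : ε * ((k : ℝ) * Ck + 2) = 1 / 20)
    (q : ℕ) (hq : q ≠ 0) :
    (∑ x ∈ q.divisorsAntidiagonal,
        ((μ x.2 : ℝ) ^ 2 * (((ζ ^ k) q : ℕ) : ℝ) ^ Ck) / ((x.1 : ℝ) * (x.2.totient : ℝ)))
      ≤ A ^ ((k : ℝ) * Ck + 2) * (q : ℝ) ^ (-(19/20) : ℝ) := by
  have hq0 : (0 : ℝ) < (q : ℝ) := by exact_mod_cast Nat.pos_of_ne_zero hq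
  set dq : ℝ := (q.divisors.card : ℝ) with hdq_def
  have hdq1 : (1 : ℝ) ≤ dq := by
    have : 1 ≤ q.divisors.card := Finset.card_pos.mpr ⟨1, Nat.one_mem_divisors.mpr hq⟩
    rw [hdq_def]; exact_mod_cast this
  have hdq0 : (0 : ℝ) < dq := lt_of_lt_of_le one_pos hdq1
  set D : ℝ := (((ζ ^ k) q : ℕ) : ℝ) ^ Ck with hD_def
  have hD0 : 0 ≤ D := Real.rpow_nonneg (Nat.cast_nonneg _) _
  have hterm : ∀ x ∈ q.divisorsAntidiagonal,
      ((μ x.2 : ℝ) ^ 2 * D) / ((x.1 : ℝ) * (x.2.totient : ℝ)) ≤ D * dq / (q : ℝ) := by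
    intro x hx
    rw [Nat.mem_divisorsAntidiagonal] at hx
    obtain ⟨hab, -⟩ := hx
    have ha0 : x.1 ≠ 0 := fun hc => hq (by rw [← hab, hc, zero_mul])
    have hb0 : x.2 ≠ 0 := fun hc => hq (by rw [← hab, hc, mul_zero])
    by_cases hsq : Squarefree x.2
    · have hμ : (μ x.2 : ℝ) ^ 2 = 1 := by
        have := moebius_sq_eq_one_of_squarefree hsq
        exact_mod_cast congrArg (Int.cast : ℤ → ℝ) this
      rw [hμ, one_mul]
      have hφpos : 0 < x.2.totient := Nat.totient_pos.mpr (Nat.pos_of_ne_zero hb0)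
      have hden : (0 : ℝ) < (x.1 : ℝ) * (x.2.totient : ℝ) := by
        have := Nat.pos_of_ne_zero ha0
        positivity
      rw [div_le_div_iff₀ hden hq0]
      have hkey : (q : ℝ) ≤ (x.1 : ℝ) * (x.2.totient : ℝ) * dq := by
        have hnat : q ≤ x.1 * (x.2.totient * q.divisors.card) := by
          calc q = x.1 * x.2 := hab.symm
            _ ≤ x.1 * (x.2.totient * x.2.divisors.card) :=
                Nat.mul_le_mul_left _ (totient_mul_card_ge _ hsq)
            _ ≤ x.1 * (x.2.totient * q.divisors.card) := by
                apply Nat.mul_le_mul_left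
                apply Nat.mul_le_mul_left
                exact Finset.card_le_card (Nat.divisors_subset_of_dvd hq ⟨x.1, by rw [← hab, mul_comm]⟩)
        calc (q : ℝ) ≤ (x.1 : ℝ) * ((x.2.totient : ℝ) * dq) := by
              rw [hdq_def]; exact_mod_cast hnat
          _ = (x.1 : ℝ) * (x.2.totient : ℝ) * dq := by ring
      calc D * (q : ℝ) ≤ D * ((x.1 : ℝ) * (x.2.totient : ℝ) * dq) :=
            mul_le_mul_of_nonneg_left hkey hD0
        _ = D * dq * ((x.1 : ℝ) * (x.2.totient : ℝ)) := by ring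
    · have : (μ x.2 : ℝ) = 0 := by
        rw [moebius_eq_zero_of_not_squarefree hsq]; simp
      rw [this]
      simp only [zero_pow, ne_eq, OfNat.ofNat_ne_zero, not_false_eq_true, zero_mul]
      rw [zero_div]
      positivity
  calc (∑ x ∈ q.divisorsAntidiagonal,
        ((μ x.2 : ℝ) ^ 2 * D) / ((x.1 : ℝ) * (x.2.totient : ℝ)))
      ≤ ∑ _x ∈ q.divisorsAntidiagonal, D * dq / (q : ℝ) := Finset.sum_le_sum hterm
    _ = dq * (D * dq / (q : ℝ)) := by
        rw [Finset.sum_const, card_divisorsAntidiagonal', nsmul_eq_mul]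
    _ = D * dq ^ (2 : ℝ) / (q : ℝ) := by
        rw [show dq ^ (2 : ℝ) = dq ^ (2 : ℕ) from Real.rpow_natCast dq 2]
        ring
    _ ≤ dq ^ ((k : ℝ) * Ck) * dq ^ (2 : ℝ) / (q : ℝ) := by
        have h1 : (((ζ ^ k) q : ℕ) : ℝ) ≤ dq ^ (k : ℕ) := by
          rw [hdq_def]; exact_mod_cast zeta_pow_le k q hq
        have hDle : D ≤ dq ^ ((k : ℝ) * Ck) := by
          calc D ≤ (dq ^ (k : ℕ)) ^ Ck :=
                Real.rpow_le_rpow (Nat.cast_nonneg _) h1 hCk.le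
            _ = dq ^ ((k : ℝ) * Ck) := by
                rw [← Real.rpow_natCast dq k, ← Real.rpow_mul hdq0.le]
        gcongr
    _ = dq ^ ((k : ℝ) * Ck + 2) / (q : ℝ) := by
        rw [← Real.rpow_add hdq0]
    _ ≤ (A * (q : ℝ) ^ ε) ^ ((k : ℝ) * Ck + 2) / (q : ℝ) := by
        have hE0 : (0 : ℝ) ≤ (k : ℝ) * Ck + 2 := by positivity
        have h1 : dq ^ ((k : ℝ) * Ck + 2) ≤ (A * (q : ℝ) ^ ε) ^ ((k : ℝ) * Ck + 2) :=
          Real.rpow_le_rpow hdq0.le (hdiv q hq) hE0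
        gcongr
    _ = A ^ ((k : ℝ) * Ck + 2) * (q : ℝ) ^ (-(19/20) : ℝ) := by
        have hE0 : (0 : ℝ) ≤ (k : ℝ) * Ck + 2 := by positivity
        rw [Real.mul_rpow (by linarith : (0:ℝ) ≤ A) (Real.rpow_nonneg hq0.le ε),
          ← Real.rpow_mul hq0.le, hεE]
        rw [div_eq_mul_inv, mul_assoc, ← Real.rpow_neg_one (q : ℝ),
          ← Real.rpow_add hq0]
        norm_num

/-- For `k ≥ 2`, `C_k > 0`, the series
`∑_q |c_q(h)| (∑_{q₀q₁=q} μ(q₁)² d_k(q)^{C_k} / (q₀ φ(q₁)))²` converges for every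
nonzero `h` and its value is `O(∑_{d ∣ |h|} d^{-9/10})` uniformly in `h`. -/
theorem ramanujan_weighted_series (k : ℕ) (hk : 2 ≤ k) (Ck : ℝ) (hCk : 0 < Ck) :
    ∃ C : ℝ, 0 < C ∧ ∀ h : ℤ, h ≠ 0 →
      Summable (fun q : ℕ => ‖ramanujanSum q h‖ *
        (∑ x ∈ q.divisorsAntidiagonal,
          ((μ x.2 : ℝ) ^ 2 * (((ζ ^ k) q : ℕ) : ℝ) ^ Ck) / ((x.1 : ℝ) * (x.2.totient : ℝ))) ^ 2) ∧
      (∑' q : ℕ, ‖ramanujanSum q h‖ *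
        (∑ x ∈ q.divisorsAntidiagonal,
          ((μ x.2 : ℝ) ^ 2 * (((ζ ^ k) q : ℕ) : ℝ) ^ Ck) / ((x.1 : ℝ) * (x.2.totient : ℝ))) ^ 2)
        ≤ C * ∑ d ∈ h.natAbs.divisors, (d : ℝ) ^ (-(9/10 : ℝ)) := by
  -- set up constants
  set E : ℝ := (k : ℝ) * Ck + 2 with hE_def
  have hE0 : (0 : ℝ) < E := by positivity
  set ε : ℝ := (1 / 20) / E with hε_def
  have hε : 0 < ε := by positivity
  have hεE : ε * E = 1 / 20 := by
    rw [hε_def]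
    field_simp
  obtain ⟨A, hA1, hdiv⟩ := divisor_bound ε hε
  set B : ℝ := A ^ E with hB_def
  have hB0 : 0 < B := Real.rpow_pos_of_pos (lt_of_lt_of_le one_pos hA1) E
  set Z : ℝ := ∑' j : ℕ, (j : ℝ) ^ (-(19/10) : ℝ) with hZ_def
  have hZsum : Summable (fun j : ℕ => (j : ℝ) ^ (-(19/10) : ℝ)) :=
    Real.summable_nat_rpow.mpr (by norm_num)
  have hZ1 : (1 : ℝ) ≤ Z := by
    have h1 : ((1 : ℕ) : ℝ) ^ (-(19/10) : ℝ) ≤ Z :=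
      Summable.le_tsum hZsum 1 (fun j _ => Real.rpow_nonneg (Nat.cast_nonneg j) _)
    simpa using h1
  have hZ0 : 0 < Z := lt_of_lt_of_le one_pos hZ1
  refine ⟨B ^ 2 * Z, by positivity, fun h hh => ?_⟩
  set H : ℕ := h.natAbs with hH_def
  have hH0 : H ≠ 0 := Int.natAbs_ne_zero.mpr hh
  set W : ℕ → ℝ := fun q => ∑ x ∈ q.divisorsAntidiagonal,
    ((μ x.2 : ℝ) ^ 2 * (((ζ ^ k) q : ℕ) : ℝ) ^ Ck) / ((x.1 : ℝ) * (x.2.totient : ℝ)) with hW_def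
  set f : ℕ → ℝ := fun q => ‖ramanujanSum q h‖ * (W q) ^ 2 with hf_def
  have hf0 : ∀ q, 0 ≤ f q := fun q => mul_nonneg (norm_nonneg _) (sq_nonneg _)
  -- pointwise bound
  set G : ℕ → ℝ := fun q => (∑ m ∈ H.divisors, if m ∣ q then (m : ℝ) else 0)
    * (B ^ 2 * (q : ℝ) ^ (-(19/10) : ℝ)) with hG_def
  have hWnonneg : ∀ q, 0 ≤ W q := by
    intro q
    apply Finset.sum_nonneg
    intro x hx
    have h1 : (0:ℝ) ≤ (μ x.2 : ℝ) ^ 2 := sq_nonneg _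
    have h2 : (0:ℝ) ≤ (((ζ ^ k) q : ℕ) : ℝ) ^ Ck := Real.rpow_nonneg (Nat.cast_nonneg _) _
    have h3 : (0:ℝ) ≤ (x.1 : ℝ) * (x.2.totient : ℝ) := by positivity
    exact div_nonneg (mul_nonneg h1 h2) h3
  have hfG : ∀ q, f q ≤ G q := by
    intro q
    by_cases hq : q = 0
    · subst hq
      have hf00 : f 0 = 0 := by
        simp [hf_def, ramanujanSum]
      rw [hf00, hG_def]
      simp only []
      rw [Nat.cast_zero, Real.zero_rpow (by norm_num : (-(19/10) : ℝ) ≠ 0), mul_zero, mul_zero]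
    · -- q ≠ 0
      have hq0 : (0:ℝ) < (q:ℝ) := by exact_mod_cast Nat.pos_of_ne_zero hq
      have hWb : W q ≤ B * (q : ℝ) ^ (-(19/20) : ℝ) :=
        weight_bound k Ck hCk A ε hA1 hε.le hdiv hεE q hq
      have hW2 : (W q) ^ 2 ≤ B ^ 2 * (q : ℝ) ^ (-(19/10) : ℝ) := by
        calc (W q) ^ 2 ≤ (B * (q : ℝ) ^ (-(19/20) : ℝ)) ^ 2 := by
              apply pow_le_pow_left₀ (hWnonneg q) hWb
          _ = B ^ 2 * (((q : ℝ) ^ (-(19/20) : ℝ)) ^ (2:ℕ)) := by ring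
          _ = B ^ 2 * (q : ℝ) ^ (-(19/10) : ℝ) := by
              rw [← Real.rpow_natCast ((q : ℝ) ^ (-(19/20) : ℝ)) 2, ← Real.rpow_mul hq0.le]
              norm_num
      have hnorm : ‖ramanujanSum q h‖ ≤ ∑ m ∈ H.divisors, if m ∣ q then (m : ℝ) else 0 := by
        refine (norm_ramanujanSum_le q hq h).trans ?_
        rw [← Finset.sum_filter]
        apply Finset.sum_le_sum_of_subset_of_nonneg
        · intro m hm
          rw [Nat.mem_divisors] at hm
          rw [Finset.mem_filter, Nat.mem_divisors]
          exact ⟨⟨(Nat.dvd_gcd_iff.mp hm.1).2, hH0⟩, (Nat.dvd_gcd_iff.mp hm.1).1⟩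
        · intro m _ _
          exact Nat.cast_nonneg m
      calc f q ≤ (∑ m ∈ H.divisors, if m ∣ q then (m : ℝ) else 0)
            * (B ^ 2 * (q : ℝ) ^ (-(19/10) : ℝ)) := by
            apply mul_le_mul hnorm hW2 (sq_nonneg _)
            exact le_trans (norm_nonneg _) hnorm
        _ = G q := rfl
  -- per-m inner sum bound
  have hinner : ∀ m : ℕ, m ≠ 0 → ∀ N : ℕ,
      (∑ q ∈ Finset.range N, if m ∣ q then ((m:ℝ) * (B ^ 2 * (q : ℝ) ^ (-(19/10) : ℝ))) else 0)
        ≤ B ^ 2 * Z * (m : ℝ) ^ (-(9/10) : ℝ) := by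
    intro m hm N
    have hm0 : (0:ℝ) < (m:ℝ) := by exact_mod_cast Nat.pos_of_ne_zero hm
    rw [← Finset.sum_filter]
    have hsplit : ∀ q ∈ (Finset.range N).filter (fun q => m ∣ q),
        (m:ℝ) * (B ^ 2 * (q : ℝ) ^ (-(19/10) : ℝ))
          = ((m:ℝ) * B ^ 2 * (m:ℝ) ^ (-(19/10) : ℝ)) * ((q / m : ℕ) : ℝ) ^ (-(19/10) : ℝ) := by
      intro q hq
      rw [Finset.mem_filter] at hq
      have hqm : q = m * (q / m) := (Nat.mul_div_cancel' hq.2).symm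
      have : (q : ℝ) = (m : ℝ) * ((q / m : ℕ) : ℝ) := by exact_mod_cast hqm
      rw [this, Real.mul_rpow hm0.le (Nat.cast_nonneg _)]
      ring
    rw [Finset.sum_congr rfl hsplit, ← Finset.mul_sum]
    have himg : (∑ q ∈ (Finset.range N).filter (fun q => m ∣ q), ((q / m : ℕ) : ℝ) ^ (-(19/10) : ℝ)) ≤ Z := by
      have hinj : ∀ x ∈ (Finset.range N).filter (fun q => m ∣ q),
          ∀ y ∈ (Finset.range N).filter (fun q => m ∣ q), x / m = y / m → x = y := by
        intro x hx y hy hxy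
        rw [Finset.mem_filter] at hx hy
        rw [← Nat.mul_div_cancel' hx.2, ← Nat.mul_div_cancel' hy.2, hxy]
      calc (∑ q ∈ (Finset.range N).filter (fun q => m ∣ q), ((q / m : ℕ) : ℝ) ^ (-(19/10) : ℝ))
          = ∑ j ∈ ((Finset.range N).filter (fun q => m ∣ q)).image (· / m),
              (j : ℝ) ^ (-(19/10) : ℝ) := (Finset.sum_image (f := fun j : ℕ => (j:ℝ) ^ (-(19/10):ℝ)) hinj).symm
        _ ≤ Z := hZsum.sum_le_tsum _ (fun j _ => Real.rpow_nonneg (Nat.cast_nonneg j) _)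
    calc ((m:ℝ) * B ^ 2 * (m:ℝ) ^ (-(19/10) : ℝ))
          * (∑ q ∈ (Finset.range N).filter (fun q => m ∣ q), ((q / m : ℕ) : ℝ) ^ (-(19/10) : ℝ))
        ≤ ((m:ℝ) * B ^ 2 * (m:ℝ) ^ (-(19/10) : ℝ)) * Z := by
          apply mul_le_mul_of_nonneg_left himg
          positivity
      _ = B ^ 2 * Z * ((m:ℝ) * (m:ℝ) ^ (-(19/10) : ℝ)) := by ring
      _ = B ^ 2 * Z * (m : ℝ) ^ (-(9/10) : ℝ) := by
          congr 1
          rw [show (m:ℝ) * (m:ℝ) ^ (-(19/10) : ℝ) = (m:ℝ) ^ ((1:ℝ) + -(19/10)) by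
            rw [Real.rpow_add hm0, Real.rpow_one]]
          norm_num
  -- total bound for partial sums
  have hpartial : ∀ N : ℕ, (∑ q ∈ Finset.range N, f q)
      ≤ (B ^ 2 * Z) * ∑ d ∈ H.divisors, (d : ℝ) ^ (-(9/10) : ℝ) := by
    intro N
    calc (∑ q ∈ Finset.range N, f q) ≤ ∑ q ∈ Finset.range N, G q :=
          Finset.sum_le_sum fun q _ => hfG q
      _ = ∑ q ∈ Finset.range N, ∑ m ∈ H.divisors,
            (if m ∣ q then ((m:ℝ) * (B ^ 2 * (q : ℝ) ^ (-(19/10) : ℝ))) else 0) := by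
          refine Finset.sum_congr rfl fun q _ => ?_
          rw [hG_def]
          simp only []
          rw [Finset.sum_mul]
          refine Finset.sum_congr rfl fun m _ => ?_
          rw [ite_mul, zero_mul]
      _ = ∑ m ∈ H.divisors, ∑ q ∈ Finset.range N,
            (if m ∣ q then ((m:ℝ) * (B ^ 2 * (q : ℝ) ^ (-(19/10) : ℝ))) else 0) :=
          Finset.sum_comm
      _ ≤ ∑ m ∈ H.divisors, B ^ 2 * Z * (m : ℝ) ^ (-(9/10) : ℝ) := by
          refine Finset.sum_le_sum fun m hm => ?_
          exact hinner m (Nat.pos_of_mem_divisors hm |>.ne') N  -- check name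
      _ = (B ^ 2 * Z) * ∑ d ∈ H.divisors, (d : ℝ) ^ (-(9/10) : ℝ) := by
          rw [Finset.mul_sum]
  exact ⟨summable_of_sum_range_le hf0 hpartial, Real.tsum_le_of_sum_range_le hf0 hpartial⟩
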